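/- Let t be the formal power series in x satisfying t = 0 + higher order terms and x = (27/4) * t * (1-t)^2. Then for every k \ge 1, the coefficient of x^k in t equals (4/27)^k * (binom(3k-1, k-1) - 3*binom(3k-2, k-2)). -/

import Mathlib

open PowerSeries

/-- If `t ∈ ℚ⟦x⟧` has zero constant term and satisfies `x = (27/4) t (1-t)²`, then for `k ≥ 1`,
`[x^k] t = (4/27)^k * (C(3k-1,k-1) - 3 C(3k-2,k-2))`, binomials with negative lower index being 0. -/
theorem coeff_inverse_series (t : PowerSeries ℚ)
    (h0 : PowerSeries.constantCoeff (R := ℚ) t = 0)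
    (ht : PowerSeries.C (R := ℚ) (27 / 4) * t * (1 - t) ^ 2 = PowerSeries.X)
    (k : ℕ) (hk : 1 ≤ k) :
    PowerSeries.coeff (R := ℚ) k t =
      (4 / 27 : ℚ) ^ k *
        ((Nat.choose (3 * k - 1) (k - 1) : ℚ) -
          3 * (if 2 ≤ k then (Nat.choose (3 * k - 2) (k - 2) : ℚ) else 0)) := by
  set u1 := d⁄dX ℚ t with hu1
  set u2 := d⁄dX ℚ u1 with hu2
  have e4 : (C (R := ℚ)) 4 = 4 := map_ofNat _ _
  have e27 : (C (R := ℚ)) 27 = 27 := map_ofNat _ _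
  have d3 : (d⁄dX ℚ) (3:ℚ⟦X⟧) = 0 := by rw [← map_ofNat (C (R := ℚ)) 3, derivative_C]
  have d4 : (d⁄dX ℚ) (4:ℚ⟦X⟧) = 0 := by rw [← e4, derivative_C]
  have d27 : (d⁄dX ℚ) (27:ℚ⟦X⟧) = 0 := by rw [← e27, derivative_C]
  have h47 : C (R := ℚ) 4 * C (R := ℚ) (27/4) = C (R := ℚ) 27 := by rw [← map_mul]; norm_num
  have hA : (27:ℚ⟦X⟧) * (t * (1-t)^2) = 4 * X := by
    rw [← e27, ← e4]
    linear_combination (C (R := ℚ) 4) * ht - (t*(1-t)^2) * h47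
  have hd1 : (27:ℚ⟦X⟧) * ((1 - 4*t + 3*t^2) * u1) = 4 := by
    have h := congrArg (⇑(d⁄dX ℚ)) hA
    simp only [Derivation.leibniz, Derivation.leibniz_pow, map_sub, map_one, d3, d4, d27,
      derivative_X, smul_eq_mul, Derivation.map_one_eq_zero, ← hu1] at h
    linear_combination h
  have hd2 : (27:ℚ⟦X⟧) * ((6*t - 4) * u1^2 + (1 - 4*t + 3*t^2) * u2) = 0 := by
    have h := congrArg (⇑(d⁄dX ℚ)) hd1
    simp only [Derivation.leibniz, Derivation.leibniz_pow, map_sub, map_add, map_one, d3, d4, d27,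
      derivative_X, smul_eq_mul, Derivation.map_one_eq_zero, ← hu1, ← hu2] at h
    linear_combination h
  have key : ((27:ℚ⟦X⟧)*(1 - 4*t + 3*t^2))^3 * (27*(X*u1) + 54*(X^2*u2) + 6*(X*t))
      = ((27:ℚ⟦X⟧)*(1 - 4*t + 3*t^2))^3 * (54*(X^2*u1) + 54*(X^3*u2) + 4*X) := by
    linear_combination ((16038 : ℚ⟦X⟧)*X + (-122472 : ℚ⟦X⟧)*X*t + (314928 : ℚ⟦X⟧)*X*t^2 + (-314928 : ℚ⟦X⟧)*X*t^3 + (118098 : ℚ⟦X⟧)*X*t^4 + (23328 : ℚ⟦X⟧)*X^2 + (-34992 : ℚ⟦X⟧)*X^2*t) * hA + ((19683 : ℚ⟦X⟧)*X + (-157464 : ℚ⟦X⟧)*X*t + (433026 : ℚ⟦X⟧)*X*t^2 + (-472392 : ℚ⟦X⟧)*X*t^3 + (177147 : ℚ⟦X⟧)*X*t^4 + (-16038 : ℚ⟦X⟧)*X^2 + (157464 : ℚ⟦X⟧)*X^2*u1 + (279936 : ℚ⟦X⟧)*X^2*t + (-866052 : ℚ⟦X⟧)*X^2*t*u1 + (-866052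 : ℚ⟦X⟧)*X^2*t^2 + (1417176 : ℚ⟦X⟧)*X^2*t^2*u1 + (944784 : ℚ⟦X⟧)*X^2*t^3 + (-708588 : ℚ⟦X⟧)*X^2*t^3*u1 + (-354294 : ℚ⟦X⟧)*X^2*t^4 + (-23328 : ℚ⟦X⟧)*X^3 + (-157464 : ℚ⟦X⟧)*X^3*u1 + (34992 : ℚ⟦X⟧)*X^3*t + (866052 : ℚ⟦X⟧)*X^3*t*u1 + (-1417176 : ℚ⟦X⟧)*X^3*t^2*u1 + (708588 : ℚ⟦X⟧)*X^3*t^3*u1) * hd1 + ((39366 : ℚ⟦X⟧)*X^2 + (-314928 : ℚ⟦X⟧)*X^2*t + (866052 : ℚ⟦X⟧)*X^2*t^2 + (-944784 : ℚ⟦X⟧)*X^2*t^3 + (354294 : ℚ⟦X⟧)*X^2*t^4 + (-39366 : ℚ⟦X⟧)*X^3 + (314928 : ℚ⟦X⟧)*X^3*t + (-866052 : ℚ⟦X⟧)*X^3*t^2 + (944784 : ℚ⟦X⟧)*X^3*t^3 + (-354294 : ℚ⟦X⟧)*X^3*t^4) * hd2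
  have hU : ((27:ℚ⟦X⟧)*(1 - 4*t + 3*t^2))^3 ≠ 0 := by
    intro hz
    have := congrArg (constantCoeff (R := ℚ)) hz
    simp [map_pow, map_mul, map_sub, map_add, h0, map_ofNat] at this
  have hODE : (27:ℚ⟦X⟧)*(X*u1) + 54*(X^2*u2) + 6*(X*t)
      = 54*(X^2*u1) + 54*(X^3*u2) + 4*X := mul_left_cancel₀ hU key
  have e54 : (C (R := ℚ)) 54 = 54 := map_ofNat _ _
  have e6 : (C (R := ℚ)) 6 = 6 := map_ofNat _ _
  rw [← e27, ← e54, ← e6, ← e4] at hODE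
  -- recurrence
  have hrec : ∀ m : ℕ, (9*((m:ℚ)+3)*(2*m+5)) * coeff (R := ℚ) (m+3) t
      = (2*(9*((m:ℚ)+2)^2-1)) * coeff (R := ℚ) (m+2) t := by
    intro m
    have h := congrArg (coeff (R := ℚ) (m+3)) hODE
    simp only [map_add, coeff_C_mul] at h
    have r1 : coeff (R := ℚ) (m+3) (X*u1) = coeff (R := ℚ) (m+2) u1 := coeff_succ_X_mul (m+2) u1
    have r2 : coeff (R := ℚ) (m+3) (X^2*u2) = coeff (R := ℚ) (m+1) u2 := coeff_X_pow_mul u2 2 (m+1)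
    have r3 : coeff (R := ℚ) (m+3) (X*t) = coeff (R := ℚ) (m+2) t := coeff_succ_X_mul (m+2) t
    have r4 : coeff (R := ℚ) (m+3) (X^2*u1) = coeff (R := ℚ) (m+1) u1 := coeff_X_pow_mul u1 2 (m+1)
    have r5 : coeff (R := ℚ) (m+3) (X^3*u2) = coeff (R := ℚ) m u2 := coeff_X_pow_mul u2 3 m
    have r6 : coeff (R := ℚ) (m+3) X = 0 := by simp [coeff_X]
    have s1 : coeff (R := ℚ) (m+2) u1 = coeff (R := ℚ) (m+3) t * ((m:ℚ)+3) := by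
      have := coeff_derivative t (m+2); rw [← hu1] at this; push_cast at this ⊢; linear_combination this
    have s2 : coeff (R := ℚ) (m+1) u2 = coeff (R := ℚ) (m+2) u1 * ((m:ℚ)+2) := by
      have := coeff_derivative u1 (m+1); rw [← hu2] at this; push_cast at this ⊢; linear_combination this
    have s3 : coeff (R := ℚ) (m+1) u1 = coeff (R := ℚ) (m+2) t * ((m:ℚ)+2) := by
      have := coeff_derivative t (m+1); rw [← hu1] at this; push_cast at this ⊢; linear_combination this
    have s4 : coeff (R := ℚ) m u2 = coeff (R := ℚ) (m+1) u1 * ((m:ℚ)+1) := by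
      have := coeff_derivative u1 m; rw [← hu2] at this; push_cast at this ⊢; linear_combination this
    rw [r1, r2, r3, r4, r5, r6, s2, s4, s1, s3] at h
    ring_nf at h ⊢
    linear_combination h/3
  have ha1 : coeff (R := ℚ) 1 t = 4/27 := by
    have h := congrArg (coeff (R := ℚ) 1) hODE
    simp only [map_add, coeff_C_mul] at h
    have r1 : coeff (R := ℚ) 1 (X*u1) = coeff (R := ℚ) 0 u1 := coeff_succ_X_mul 0 u1
    have r2 : coeff (R := ℚ) 1 (X^2*u2) = 0 := by rw [coeff_X_pow_mul']; norm_num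
    have r3 : coeff (R := ℚ) 1 (X*t) = coeff (R := ℚ) 0 t := coeff_succ_X_mul 0 t
    have r4 : coeff (R := ℚ) 1 (X^2*u1) = 0 := by rw [coeff_X_pow_mul']; norm_num
    have r5 : coeff (R := ℚ) 1 (X^3*u2) = 0 := by rw [coeff_X_pow_mul']; norm_num
    have r6 : coeff (R := ℚ) 1 X = (1:ℚ) := coeff_one_X
    have s1 : coeff (R := ℚ) 0 u1 = coeff (R := ℚ) 1 t * 1 := by
      have := coeff_derivative t 0; rw [← hu1] at this; push_cast at this ⊢; linear_combination this
    have s0 : coeff (R := ℚ) 0 t = 0 := by rw [coeff_zero_eq_constantCoeff_apply, h0]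
    rw [r1, r2, r3, r4, r5, r6, s1, s0] at h
    linarith
  have ha2 : coeff (R := ℚ) 2 t = 32/729 := by
    have h := congrArg (coeff (R := ℚ) 2) hODE
    simp only [map_add, coeff_C_mul] at h
    have r1 : coeff (R := ℚ) 2 (X*u1) = coeff (R := ℚ) 1 u1 := coeff_succ_X_mul 1 u1
    have r2 : coeff (R := ℚ) 2 (X^2*u2) = coeff (R := ℚ) 0 u2 := coeff_X_pow_mul u2 2 0
    have r3 : coeff (R := ℚ) 2 (X*t) = coeff (R := ℚ) 1 t := coeff_succ_X_mul 1 t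
    have r4 : coeff (R := ℚ) 2 (X^2*u1) = coeff (R := ℚ) 0 u1 := coeff_X_pow_mul u1 2 0
    have r5 : coeff (R := ℚ) 2 (X^3*u2) = 0 := by rw [coeff_X_pow_mul']; norm_num
    have r6 : coeff (R := ℚ) 2 X = (0:ℚ) := by rw [coeff_X]; norm_num
    have s1 : coeff (R := ℚ) 1 u1 = coeff (R := ℚ) 2 t * 2 := by
      have := coeff_derivative t 1; rw [← hu1] at this; push_cast at this ⊢; linear_combination this
    have s2 : coeff (R := ℚ) 0 u2 = coeff (R := ℚ) 1 u1 * 1 := by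
      have := coeff_derivative u1 0; rw [← hu2] at this; push_cast at this ⊢; linear_combination this
    have s3 : coeff (R := ℚ) 0 u1 = coeff (R := ℚ) 1 t * 1 := by
      have := coeff_derivative t 0; rw [← hu1] at this; push_cast at this ⊢; linear_combination this
    rw [r1, r2, r3, r4, r5, r6, s2, s1, s3, ha1] at h
    linarith
  have claim : ∀ m : ℕ, ((27:ℚ))^(m+1) * ((m:ℚ)+1) * coeff (R := ℚ) (m+1) t
      = (4:ℚ)^(m+1) * (Nat.choose (3*m+1) m : ℚ) := by
    intro m
    induction m with
    | zero => rw [ha1]; norm_num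
    | succ j ihj =>
      cases j with
      | zero => rw [ha2]; norm_num [Nat.choose]
      | succ i =>
        rw [show i+1+1+1 = i+3 from rfl, show 3*(i+1+1)+1 = 3*i+7 by ring]
        rw [show i+1+1 = i+2 from rfl, show 3*(i+1)+1 = 3*i+4 by ring] at ihj
        have n1 := Nat.add_one_mul_choose_eq (3*i+6) (i+1)
        have n2 := Nat.choose_mul_succ_eq (3*i+5) (i+1)
        have n3 := Nat.choose_mul_succ_eq (3*i+4) (i+1)
        rw [show (3*i+5)+1 - (i+1) = 2*i+5 by omega, show (3*i+5)+1 = 3*i+6 by omega] at n2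
        rw [show (3*i+4)+1 - (i+1) = 2*i+4 by omega, show (3*i+4)+1 = 3*i+5 by omega] at n3
        have q1 : ((3:ℚ)*i+7) * (Nat.choose (3*i+6) (i+1) : ℚ)
            = (Nat.choose (3*i+7) (i+2) : ℚ) * ((i:ℚ)+2) := by
          rw [show 3*i+6+1 = 3*i+7 from rfl, show i+1+1 = i+2 from rfl] at n1
          exact_mod_cast n1
        have q2 : (Nat.choose (3*i+5) (i+1) : ℚ) * ((3:ℚ)*i+6)
            = (Nat.choose (3*i+6) (i+1) : ℚ) * ((2:ℚ)*i+5) := by exact_mod_cast n2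
        have q3 : (Nat.choose (3*i+4) (i+1) : ℚ) * ((3:ℚ)*i+5)
            = (Nat.choose (3*i+5) (i+1) : ℚ) * ((2:ℚ)*i+4) := by exact_mod_cast n3
        have qq : (Nat.choose (3*i+7) (i+2) : ℚ) * (((i:ℚ)+2)*((2:ℚ)*i+5)*((2:ℚ)*i+4))
            = (Nat.choose (3*i+4) (i+1) : ℚ) * (((3:ℚ)*i+7)*((3:ℚ)*i+6)*((3:ℚ)*i+5)) := by
          linear_combination (-((2*(i:ℚ)+5)*(2*(i:ℚ)+4)))*q1 - (((3:ℚ)*i+7)*((2:ℚ)*i+4))*q2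
            - (((3:ℚ)*i+7)*((3:ℚ)*i+6))*q3
        have h9 : ((3:ℚ)*(2*(i:ℚ)+5)*((i:ℚ)+2)^2) ≠ 0 := by positivity
        apply mul_left_cancel₀ h9
        push_cast at ihj ⊢
        linear_combination (9*(27:ℚ)^(i+2)*((i:ℚ)+2)^2) * hrec i
          + (18*(3*(i:ℚ)+5)*(3*(i:ℚ)+7)*((i:ℚ)+2)) * ihj + (-6*(4:ℚ)^(i+2)) * qq
  obtain ⟨m, rfl⟩ : ∃ m, k = m+1 := ⟨k-1, by omega⟩
  cases m with
  | zero =>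
    rw [ha1]; norm_num
  | succ j =>
    have cc := claim (j+1)
    rw [show j+1+1 = j+2 from rfl, show 3*(j+1)+1 = 3*j+4 by ring] at cc
    rw [show 3*(j+1+1)-1 = 3*j+5 by omega, show (j+1+1)-1 = j+1 by omega,
      show 3*(j+1+1)-2 = 3*j+4 by omega, show (j+1+1)-2 = j by omega,
      if_pos (by omega : 2 ≤ j+1+1), show j+1+1 = j+2 from rfl]
    have p1 : ((3*j+5).choose (j+1) : ℚ) = ((3*j+4).choose j : ℚ) + ((3*j+4).choose (j+1) : ℚ) := by
      exact_mod_cast congrArg (Nat.cast (R:=ℚ)) (Nat.choose_succ_succ' (3*j+4) j)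
    have p2 : ((3*j+4).choose (j+1) : ℚ) * ((j:ℚ)+1) = ((3*j+4).choose j : ℚ) * (2*(j:ℚ)+4) := by
      have := Nat.choose_succ_right_eq (3*j+4) j
      rw [show 3*j+4 - j = 2*j+4 by omega] at this
      exact_mod_cast this
    -- from cc : 27^(j+2) * (j+2) * coeff = 4^(j+2) * C(3j+4, j+1)
    have h27 : ((27:ℚ))^(j+2) * ((j:ℚ)+2) ≠ 0 := by positivity
    apply mul_left_cancel₀ h27
    push_cast at cc ⊢
    rw [show ((4:ℚ)/27) = 4/27 from rfl]
    have hdiv : ((4:ℚ)/27)^j * ((27:ℚ))^j = 4^j := by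
      rw [div_pow]; field_simp
    linear_combination cc
      - (16*((j:ℚ)+2) * (((3*j+5).choose (j+1) : ℚ) - 3*((3*j+4).choose j : ℚ))) * hdiv
      - (16*(4:ℚ)^j*((j:ℚ)+2)) * p1 - (16*(4:ℚ)^j) * p2
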